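/- Let V be a finite point set in ℝ² such that G_r(V) (disk graph with radius r) is connected, and let Dom ⊆ V dominate V within range r. Then the diameter (in hops) of G_{3r}(Dom) is at most the diameter of G_r(V). -/

import Mathlib

def diskGraph (S : Finset (EuclideanSpace ℝ (Fin 2))) (ρ : ℝ) : SimpleGraph ↥S where
  Adj u v := u ≠ v ∧ dist (u : EuclideanSpace ℝ (Fin 2)) (v : EuclideanSpace ℝ (Fin 2)) ≤ ρ
  symm := ⟨fun u v ⟨h1, h2⟩ => ⟨h1.symm, by rwa [dist_comm]⟩⟩
  loopless := ⟨fun u ⟨h, _⟩ => h rfl⟩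

private lemma edist_le_one_of_close {S : Finset (EuclideanSpace ℝ (Fin 2))} {ρ : ℝ}
    (u v : ↥S) (h : dist (u : EuclideanSpace ℝ (Fin 2)) (v : EuclideanSpace ℝ (Fin 2)) ≤ ρ) :
    (diskGraph S ρ).edist u v ≤ 1 := by
  by_cases huv : u = v
  · subst huv; simp [SimpleGraph.edist_self]
  · exact le_of_eq (SimpleGraph.edist_eq_one_iff_adj.mpr ⟨huv, h⟩)

private lemma inner_lemma (V : Finset (EuclideanSpace ℝ (Fin 2))) (r : ℝ) (hr : 0 < r)
    (Dom : Finset (EuclideanSpace ℝ (Fin 2))) (hDV : Dom ⊆ V)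
    (hdom : ∀ v ∈ V, ∃ u ∈ Dom, dist v u ≤ r) :
    ∀ {x y : ↥V} (q : (diskGraph V r).Walk x y) (u' : ↥Dom),
      dist (x : EuclideanSpace ℝ (Fin 2)) (u' : EuclideanSpace ℝ (Fin 2)) ≤ r →
      ∀ (uy : ↥Dom), (uy : EuclideanSpace ℝ (Fin 2)) = (y : EuclideanSpace ℝ (Fin 2)) →
      (diskGraph Dom (3 * r)).edist u' uy ≤ q.length + 1 := by
  intro x y q
  induction q with
  | nil =>
    intro u' hu' uy huy
    have h1 : dist (u' : EuclideanSpace ℝ (Fin 2)) (uy : EuclideanSpace ℝ (Fin 2)) ≤ 3 * r := by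
      rw [huy, dist_comm]; linarith
    simpa using edist_le_one_of_close u' uy h1
  | @cons x x'' y hadj q' ih =>
    intro u' hu' uy huy
    obtain ⟨u, huD, hud⟩ := hdom (x'' : EuclideanSpace ℝ (Fin 2)) x''.2
    set u'' : ↥Dom := ⟨u, huD⟩ with hdef
    have hstep : dist (u' : EuclideanSpace ℝ (Fin 2)) (u'' : EuclideanSpace ℝ (Fin 2)) ≤ 3 * r := by
      have t1 := dist_triangle (u' : EuclideanSpace ℝ (Fin 2)) (x : EuclideanSpace ℝ (Fin 2))
        (u'' : EuclideanSpace ℝ (Fin 2))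
      have t2 := dist_triangle (x : EuclideanSpace ℝ (Fin 2)) (x'' : EuclideanSpace ℝ (Fin 2))
        (u'' : EuclideanSpace ℝ (Fin 2))
      have hxu' : dist (u' : EuclideanSpace ℝ (Fin 2)) (x : EuclideanSpace ℝ (Fin 2)) ≤ r := by
        rwa [dist_comm]
      have hxx'' : dist (x : EuclideanSpace ℝ (Fin 2)) (x'' : EuclideanSpace ℝ (Fin 2)) ≤ r :=
        hadj.2
      have : dist (x'' : EuclideanSpace ℝ (Fin 2)) (u'' : EuclideanSpace ℝ (Fin 2)) ≤ r := hud
      linarith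
    have h1 : (diskGraph Dom (3 * r)).edist u' u'' ≤ 1 := edist_le_one_of_close u' u'' hstep
    have h2 : (diskGraph Dom (3 * r)).edist u'' uy ≤ q'.length + 1 := ih u'' hud uy huy
    calc (diskGraph Dom (3 * r)).edist u' uy
        ≤ (diskGraph Dom (3 * r)).edist u' u'' + (diskGraph Dom (3 * r)).edist u'' uy :=
          SimpleGraph.edist_triangle
      _ ≤ 1 + (q'.length + 1) := add_le_add h1 h2
      _ = (q'.length + 1) + 1 := by ring
      _ = (SimpleGraph.Walk.cons hadj q').length + 1 := by
          push_cast [SimpleGraph.Walk.length_cons]; ring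

/-- Diameter transfer: if the disk graph of radius `r` on `V` is connected and `Dom ⊆ V`
dominates `V` within range `r`, then the hop diameter of the disk graph of radius `3r`
on `Dom` is at most the hop diameter of the disk graph of radius `r` on `V`. -/
theorem stmt_8 (V : Finset (EuclideanSpace ℝ (Fin 2))) (r : ℝ) (hr : 0 < r)
    (hconn : (diskGraph V r).Connected)
    (Dom : Finset (EuclideanSpace ℝ (Fin 2))) (hDV : Dom ⊆ V)
    (hdom : ∀ v ∈ V, ∃ u ∈ Dom, dist v u ≤ r) :
    (diskGraph Dom (3 * r)).diam ≤ (diskGraph V r).diam := by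
  have hN : Nonempty ↥V := hconn.nonempty
  -- ediam of V graph is not ⊤
  have hVtop : (diskGraph V r).ediam ≠ ⊤ := by
    obtain ⟨u, v, huv⟩ := SimpleGraph.exists_edist_eq_ediam_of_finite (G := diskGraph V r)
    rw [← huv]
    exact SimpleGraph.edist_ne_top_iff_reachable.mpr (hconn u v)
  -- key: edist in Dom graph bounded by edist in V graph
  have key : ∀ a b : ↥Dom, (diskGraph Dom (3 * r)).edist a b ≤
      (diskGraph V r).edist ⟨a, hDV a.2⟩ ⟨b, hDV b.2⟩ := by
    intro a b
    obtain ⟨p, hp⟩ := hconn.exists_walk_length_eq_edist (⟨a, hDV a.2⟩ : ↥V) ⟨b, hDV b.2⟩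
    rw [← hp]
    by_cases hab : a = b
    · have h0 : (diskGraph Dom (3 * r)).edist a b = 0 := by
        rw [hab]; exact SimpleGraph.edist_self
      simp [h0]
    · have hne : (⟨a, hDV a.2⟩ : ↥V) ≠ ⟨b, hDV b.2⟩ := by
        intro h
        exact hab (Subtype.ext (by simpa using congrArg Subtype.val h))
      have hnil : ¬ p.Nil := SimpleGraph.Walk.not_nil_of_ne hne
      have hadj := p.adj_snd hnil
      have hd : dist ((p.getVert 1 : ↥V) : EuclideanSpace ℝ (Fin 2))
          (a : EuclideanSpace ℝ (Fin 2)) ≤ r := by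
        have := hadj.2
        rw [dist_comm]
        simpa using this
      have hkey := inner_lemma V r hr Dom hDV hdom p.tail a hd b rfl
      have hlen : (p.tail.length : ℕ∞) + 1 = (p.length : ℕ∞) := by
        exact_mod_cast SimpleGraph.Walk.length_tail_add_one hnil
      calc (diskGraph Dom (3 * r)).edist a b ≤ p.tail.length + 1 := hkey
        _ = (p.length : ℕ∞) := hlen
  have hediam : (diskGraph Dom (3 * r)).ediam ≤ (diskGraph V r).ediam := by
    apply SimpleGraph.ediam_le_of_edist_le
    intro a b
    exact (key a b).trans SimpleGraph.edist_le_ediam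
  have := ENat.toNat_le_toNat hediam hVtop
  simpa [SimpleGraph.diam] using this
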